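/- Let m ≥ 1, x₀ ∈ ℝ^m, let f : [0,∞) × ℝ^m × ℝ^m → ℝ^m be continuous, and let g₁,…,g_m : ℝ → ℝ be continuous. Fix α > 0 and T > 0. Set M := max of ‖f(t,u,v)‖ over t ∈ [0,T], u in the closed box ∏_{i=1}^m [x₀ᵢ−α, x₀ᵢ+α], and v ∈ ∏_{i=1}^m g_i([x₀ᵢ−α, x₀ᵢ+α]), and assume M > 0. Assume there exist constants L > 0 and L_α > 0 such that ‖f(t,u₁,v₁) − f(t,u₂,v₂)‖ ≤ L(‖u₁−u₂‖ + ‖v₁−v₂‖) for all t ∈ [0,T], u₁,u₂ in the box and v₁,v₂ in ∏_{i=1}^m g_i([x₀ᵢ−α, x₀ᵢ+α]), and |g_i(x) − g_i(y)| ≤ L_α |x − y| for all x,y ∈ [x₀ᵢ−α, x₀ᵢ+α] and each i. Then for every T̄ with 0 < T̄ < min{α/M, 1/(L(1+L_α√m)), T} there exists a continuously differentiable function x : [0,T̄] → ℝ^m such that x(0) = x₀ and, for all t ∈ [0,T̄], ẋ(t) = f(t, x(t), (max_{s∈[0,t]} g₁(x₁(s)), …, max_{s∈[0,t]} g_m(x_m(s)))).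 -/

import Mathlib

open Set MeasureTheory intervalIntegral Topology Filter

private lemma coord_abs_le_norm' {m : ℕ} (v : EuclideanSpace ℝ (Fin m)) (i : Fin m) :
    |v i| ≤ ‖v‖ := by
  rw [EuclideanSpace.norm_eq, ← Real.sqrt_sq_eq_abs]
  apply Real.sqrt_le_sqrt
  have := Finset.single_le_sum (f := fun j => ‖v j‖ ^ 2) (fun j _ => sq_nonneg _)
    (Finset.mem_univ i)
  simpa [Real.norm_eq_abs, sq_abs] using this

private lemma norm_le_sqrt_card' {m : ℕ} (hm : 0 < m) (v : EuclideanSpace ℝ (Fin m)) {c : ℝ}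
    (h : ∀ i, |v i| ≤ c) : ‖v‖ ≤ Real.sqrt m * c := by
  have hc : 0 ≤ c := le_trans (abs_nonneg _) (h ⟨0, hm⟩)
  rw [EuclideanSpace.norm_eq]
  have hsum : ∑ i, ‖v i‖ ^ 2 ≤ (m : ℝ) * c ^ 2 := by
    calc ∑ i, ‖v i‖ ^ 2 ≤ ∑ _i : Fin m, c ^ 2 := by
          apply Finset.sum_le_sum
          intro i _
          have := h i
          rw [Real.norm_eq_abs]
          nlinarith [abs_nonneg (v i)]
      _ = (m : ℝ) * c ^ 2 := by simp [Finset.sum_const]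
  calc Real.sqrt (∑ i, ‖v i‖ ^ 2) ≤ Real.sqrt ((m:ℝ) * c ^ 2) := Real.sqrt_le_sqrt hsum
    _ = Real.sqrt m * c := by
        rw [Real.sqrt_mul (Nat.cast_nonneg m), Real.sqrt_sq hc]

private lemma sSup_image_Icc_sub_le' {a b : ℝ → ℝ} {s : ℝ} (hs : 0 ≤ s)
    (ha : Continuous a) (hb : Continuous b) {ε : ℝ}
    (h : ∀ σ ∈ Icc (0:ℝ) s, |a σ - b σ| ≤ ε) :
    |sSup (a '' Icc 0 s) - sSup (b '' Icc 0 s)| ≤ ε := by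
  have hne : (Icc (0:ℝ) s).Nonempty := nonempty_Icc.2 hs
  have hbddA : BddAbove (a '' Icc 0 s) := (isCompact_Icc.image ha).bddAbove
  have hbddB : BddAbove (b '' Icc 0 s) := (isCompact_Icc.image hb).bddAbove
  rw [abs_sub_le_iff]
  constructor
  · rw [sub_le_iff_le_add]
    apply csSup_le (hne.image a)
    rintro _ ⟨σ, hσ, rfl⟩
    have h1 : a σ ≤ b σ + ε := by have := h σ hσ; rw [abs_sub_le_iff] at this; linarith [this.1]
    linarith [le_csSup hbddB (mem_image_of_mem b hσ)]
  · rw [sub_le_iff_le_add]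
    apply csSup_le (hne.image b)
    rintro _ ⟨σ, hσ, rfl⟩
    have h1 : b σ ≤ a σ + ε := by have := h σ hσ; rw [abs_sub_le_iff] at this; linarith [this.2]
    linarith [le_csSup hbddA (mem_image_of_mem a hσ)]

private lemma runningSup_continuousOn' {w : ℝ → ℝ} (hw : Continuous w) :
    ContinuousOn (fun t => sSup (w '' Icc 0 t)) (Ici 0) := by
  intro t ht
  have hbdd : ∀ u : ℝ, BddAbove (w '' Icc 0 u) := fun u => (isCompact_Icc.image hw).bddAbove
  have hmono : ∀ u₁ u₂ : ℝ, 0 ≤ u₁ → u₁ ≤ u₂ →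
      sSup (w '' Icc 0 u₁) ≤ sSup (w '' Icc 0 u₂) := by
    intro u₁ u₂ h0 h12
    exact csSup_le_csSup (hbdd u₂) ((nonempty_Icc.2 h0).image w)
      (image_mono (Icc_subset_Icc_right h12))
  rw [Metric.continuousWithinAt_iff]
  intro ε hε
  have hεq : 0 < ε / 4 := by linarith
  obtain ⟨δ, hδ, hδc⟩ := Metric.continuousAt_iff.1 hw.continuousAt (ε / 4) hεq
  refine ⟨δ, hδ, ?_⟩
  intro t' ht' hdist
  have key : ∀ u v : ℝ, 0 ≤ u → u ≤ v → |u - t| < δ → |v - t| < δ →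
      sSup (w '' Icc 0 v) ≤ sSup (w '' Icc 0 u) + ε / 2 := by
    intro u v hu huv hut hvt
    apply csSup_le (((nonempty_Icc.2 (hu.trans huv))).image w)
    rintro _ ⟨σ, hσ, rfl⟩
    rcases le_or_gt σ u with hσu | hσu
    · have : w σ ≤ sSup (w '' Icc 0 u) := le_csSup (hbdd u) ⟨σ, ⟨hσ.1, hσu⟩, rfl⟩
      linarith
    · have hσt : |σ - t| < δ := by
        rw [abs_sub_lt_iff] at hut hvt ⊢
        constructor <;> [linarith [hσ.2]; linarith]
      have h1 : |w σ - w t| < ε / 4 := by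
        have := hδc (show dist σ t < δ by rwa [Real.dist_eq])
        rwa [Real.dist_eq] at this
      have h2 : |w u - w t| < ε / 4 := by
        have := hδc (show dist u t < δ by rwa [Real.dist_eq])
        rwa [Real.dist_eq] at this
      have h3 : w u ≤ sSup (w '' Icc 0 u) := le_csSup (hbdd u) ⟨u, ⟨hu, le_rfl⟩, rfl⟩
      rw [abs_sub_lt_iff] at h1 h2
      linarith
  have ht'0 : (0:ℝ) ≤ t' := ht'
  have ht0 : (0:ℝ) ≤ t := ht
  rw [Real.dist_eq] at hdist ⊢
  have hself : |t - t| < δ := by simpa using hδ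
  rcases le_total t' t with hc | hc
  · have h1 := key t' t ht'0 hc hdist hself
    have h2 := hmono t' t ht'0 hc
    rw [abs_sub_lt_iff]
    constructor <;> linarith
  · have h1 := key t t' ht0 hc hself hdist
    have h2 := hmono t t' ht0 hc
    rw [abs_sub_lt_iff]
    constructor <;> linarith

/-- Local existence for the system of differential equations with maxima
`ẋ(t) = f(t, x(t), (max_{[0,t]} g₁∘x₁, …, max_{[0,t]} g_m∘x_m))`, `x(0) = x₀`. -/
theorem exists_solution_system_with_maxima
    (m : ℕ) (hm : 1 ≤ m) (x₀ : EuclideanSpace ℝ (Fin m))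
    (f : ℝ → EuclideanSpace ℝ (Fin m) → EuclideanSpace ℝ (Fin m) → EuclideanSpace ℝ (Fin m))
    (g : Fin m → ℝ → ℝ)
    (hf : ContinuousOn
      (fun p : ℝ × EuclideanSpace ℝ (Fin m) × EuclideanSpace ℝ (Fin m) => f p.1 p.2.1 p.2.2)
      (Set.Ici 0 ×ˢ Set.univ ×ˢ Set.univ))
    (hg : ∀ i, Continuous (g i))
    (α T M L Lα : ℝ) (hα : 0 < α) (hT : 0 < T)
    (hM : IsGreatest
      ((fun p : ℝ × EuclideanSpace ℝ (Fin m) × EuclideanSpace ℝ (Fin m) => ‖f p.1 p.2.1 p.2.2‖) ''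
        (Set.Icc 0 T ×ˢ {u | ∀ i, u i ∈ Set.Icc (x₀ i - α) (x₀ i + α)} ×ˢ
          {v | ∀ i, v i ∈ g i '' Set.Icc (x₀ i - α) (x₀ i + α)})) M)
    (hMpos : 0 < M) (hL : 0 < L) (hLα : 0 < Lα)
    (hfL : ∀ t ∈ Set.Icc (0:ℝ) T, ∀ u₁ u₂ v₁ v₂ : EuclideanSpace ℝ (Fin m),
      (∀ i, u₁ i ∈ Set.Icc (x₀ i - α) (x₀ i + α)) →
      (∀ i, u₂ i ∈ Set.Icc (x₀ i - α) (x₀ i + α)) →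
      (∀ i, v₁ i ∈ g i '' Set.Icc (x₀ i - α) (x₀ i + α)) →
      (∀ i, v₂ i ∈ g i '' Set.Icc (x₀ i - α) (x₀ i + α)) →
      ‖f t u₁ v₁ - f t u₂ v₂‖ ≤ L * (‖u₁ - u₂‖ + ‖v₁ - v₂‖))
    (hgL : ∀ i, ∀ x ∈ Set.Icc (x₀ i - α) (x₀ i + α), ∀ y ∈ Set.Icc (x₀ i - α) (x₀ i + α),
      |g i x - g i y| ≤ Lα * |x - y|)
    (T' : ℝ) (hT'pos : 0 < T')
    (hT' : T' < min (min (α / M) (1 / (L * (1 + Lα * Real.sqrt m)))) T) :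
    ∃ x : ℝ → EuclideanSpace ℝ (Fin m),
      ContinuousOn x (Set.Icc 0 T') ∧ x 0 = x₀ ∧
      ∀ t ∈ Set.Icc (0:ℝ) T', HasDerivWithinAt x
        (f t (x t) ((WithLp.equiv 2 (Fin m → ℝ)).symm
          fun i => sSup ((fun s => g i (x s i)) '' Set.Icc 0 t)))
        (Set.Icc 0 T') t := by
  classical
  have hmpos : 0 < m := hm
  have hle : (0:ℝ) ≤ T' := hT'pos.le
  -- numeric facts
  have hT'T : T' < T := hT'.trans_le (min_le_right _ _)
  have hT'α : T' < α / M := lt_of_lt_of_le hT' ((min_le_left _ _).trans (min_le_left _ _))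
  set c : ℝ := L * (1 + Lα * Real.sqrt m) with hc_def
  have hsqrt : (0:ℝ) ≤ Real.sqrt m := Real.sqrt_nonneg _
  have hcpos : 0 < c := by
    apply mul_pos hL
    nlinarith [mul_nonneg hLα.le hsqrt]
  have hT'c : T' < 1 / c := lt_of_lt_of_le hT' ((min_le_left _ _).trans (min_le_right _ _))
  have hk1 : T' * c < 1 := by
    rw [lt_div_iff₀ hcpos] at hT'c
    linarith
  have hMT' : M * T' < α := by
    rw [lt_div_iff₀ hMpos] at hT'α
    linarith
  -- basic sets
  set box : Set (EuclideanSpace ℝ (Fin m)) :=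
    {u | ∀ i, u i ∈ Icc (x₀ i - α) (x₀ i + α)} with hbox_def
  set gbox : Set (EuclideanSpace ℝ (Fin m)) :=
    {v | ∀ i, v i ∈ g i '' Icc (x₀ i - α) (x₀ i + α)} with hgbox_def
  have hx₀box : x₀ ∈ box := fun i => ⟨by linarith, by linarith⟩
  -- the Picard operator ingredients
  set V : (ℝ → EuclideanSpace ℝ (Fin m)) → ℝ → EuclideanSpace ℝ (Fin m) :=
    fun u s => (WithLp.equiv 2 (Fin m → ℝ)).symm
      (fun i => sSup ((fun σ => g i (u σ i)) '' Icc 0 s)) with hV_def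
  set F : (ℝ → EuclideanSpace ℝ (Fin m)) → ℝ → EuclideanSpace ℝ (Fin m) :=
    fun u s => f s (u s) (V u s) with hF_def
  -- coordinate evaluation is continuous
  have hcoord : ∀ i : Fin m, Continuous (fun v : EuclideanSpace ℝ (Fin m) => v i) :=
    fun i => (continuous_apply i).comp (PiLp.continuous_ofLp 2 (fun _ : Fin m => ℝ))
  have hVcoord : ∀ (u : ℝ → EuclideanSpace ℝ (Fin m)) (s : ℝ) (i : Fin m),
      V u s i = sSup ((fun σ => g i (u σ i)) '' Icc 0 s) := by
    intro u s i
    simp [hV_def, PiLp.toLp_apply]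
  -- continuity of V u on [0, ∞)
  have hVcont : ∀ u : ℝ → EuclideanSpace ℝ (Fin m), Continuous u →
      ContinuousOn (V u) (Ici 0) := by
    intro u hu
    have : ContinuousOn (fun s => (fun i => sSup ((fun σ => g i (u σ i)) '' Icc 0 s)))
        (Ici (0:ℝ)) := by
      apply continuousOn_pi.2
      intro i
      exact runningSup_continuousOn' ((hg i).comp ((hcoord i).comp hu))
    exact (PiLp.continuous_toLp 2 (fun _ : Fin m => ℝ)).comp_continuousOn this
  -- membership of V u s in gbox
  have hVmem : ∀ u : ℝ → EuclideanSpace ℝ (Fin m), Continuous u →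
      (∀ σ ∈ Icc (0:ℝ) T', u σ ∈ box) → ∀ s ∈ Icc (0:ℝ) T', V u s ∈ gbox := by
    intro u hu hubox s hs i
    rw [hVcoord]
    have hwc : Continuous fun σ => g i (u σ i) := (hg i).comp ((hcoord i).comp hu)
    have hcomp : IsCompact ((fun σ => g i (u σ i)) '' Icc 0 s) := isCompact_Icc.image hwc
    have hne : ((fun σ => g i (u σ i)) '' Icc 0 s).Nonempty :=
      (nonempty_Icc.2 hs.1).image _
    have := hcomp.sSup_mem hne
    obtain ⟨σ, hσ, hσe⟩ := this
    exact ⟨u σ i, hubox σ ⟨hσ.1, hσ.2.trans hs.2⟩ i, hσe⟩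
  -- continuity of F u
  have hFcont : ∀ u : ℝ → EuclideanSpace ℝ (Fin m), Continuous u →
      ContinuousOn (F u) (Ici 0) := by
    intro u hu
    have h1 : ContinuousOn (fun s => ((s, u s, V u s) :
        ℝ × EuclideanSpace ℝ (Fin m) × EuclideanSpace ℝ (Fin m))) (Ici 0) :=
      continuousOn_id.prodMk (hu.continuousOn.prodMk (hVcont u hu))
    have h2 : MapsTo (fun s => ((s, u s, V u s) :
        ℝ × EuclideanSpace ℝ (Fin m) × EuclideanSpace ℝ (Fin m))) (Ici 0)
        (Ici 0 ×ˢ univ ×ˢ univ) := fun s hs => ⟨hs, trivial, trivial⟩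
    exact hf.comp h1 h2
  -- bound on F u
  have hFbound : ∀ u : ℝ → EuclideanSpace ℝ (Fin m), Continuous u →
      (∀ σ ∈ Icc (0:ℝ) T', u σ ∈ box) → ∀ s ∈ Icc (0:ℝ) T', ‖F u s‖ ≤ M := by
    intro u hu hubox s hs
    apply hM.2
    exact ⟨(s, u s, V u s), ⟨⟨hs.1, hs.2.trans hT'T.le⟩, hubox s hs, hVmem u hu hubox s hs⟩, rfl⟩
  -- interval integrability of F u
  have hFint : ∀ u : ℝ → EuclideanSpace ℝ (Fin m), Continuous u →
      ∀ t ∈ Icc (0:ℝ) T', IntervalIntegrable (F u) volume 0 t := by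
    intro u hu t ht
    apply ContinuousOn.intervalIntegrable
    apply (hFcont u hu).mono
    rw [uIcc_of_le ht.1]
    exact Icc_subset_Ici_self
  -- distance of the Picard map from x₀
  have hPdist : ∀ u : ℝ → EuclideanSpace ℝ (Fin m), Continuous u →
      (∀ σ ∈ Icc (0:ℝ) T', u σ ∈ box) → ∀ t ∈ Icc (0:ℝ) T',
      ‖∫ s in (0:ℝ)..t, F u s‖ ≤ M * t := by
    intro u hu hubox t ht
    have := intervalIntegral.norm_integral_le_of_norm_le_const
      (C := M) (f := F u) (a := 0) (b := t) ?_
    · calc ‖∫ s in (0:ℝ)..t, F u s‖ ≤ M * |t - 0| := this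
        _ = M * t := by rw [sub_zero, abs_of_nonneg ht.1]
    · intro s hs
      rw [uIoc_of_le ht.1] at hs
      exact hFbound u hu hubox s ⟨hs.1.le, hs.2.trans ht.2⟩
  -- the Picard map stays in the box
  have hPbox : ∀ u : ℝ → EuclideanSpace ℝ (Fin m), Continuous u →
      (∀ σ ∈ Icc (0:ℝ) T', u σ ∈ box) → ∀ t ∈ Icc (0:ℝ) T',
      (x₀ + ∫ s in (0:ℝ)..t, F u s) ∈ box := by
    intro u hu hubox t ht i
    have h1 : ‖∫ s in (0:ℝ)..t, F u s‖ ≤ M * t := hPdist u hu hubox t ht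
    have h2 : M * t ≤ M * T' := by
      apply mul_le_mul_of_nonneg_left ht.2 hMpos.le
    have h3 : |(∫ s in (0:ℝ)..t, F u s) i| ≤ α :=
      le_trans (coord_abs_le_norm' _ i) (by linarith)
    have h4 : (x₀ + ∫ s in (0:ℝ)..t, F u s) i = x₀ i + (∫ s in (0:ℝ)..t, F u s) i := rfl
    rw [abs_le] at h3
    rw [h4]
    constructor <;> [linarith [h3.1]; linarith [h3.2]]
  -- continuity of the Picard primitive
  have hPcont : ∀ u : ℝ → EuclideanSpace ℝ (Fin m), Continuous u →
      ContinuousOn (fun t => x₀ + ∫ s in (0:ℝ)..t, F u s) (Icc 0 T') := by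
    intro u hu
    apply continuousOn_const.add
    have hio : IntegrableOn (F u) (uIcc 0 T') volume := by
      rw [uIcc_of_le hle]
      exact ((hFcont u hu).mono Icc_subset_Ici_self).integrableOn_Icc
    have := intervalIntegral.continuousOn_primitive_interval (a := 0) (b := T') hio
    rwa [uIcc_of_le hle] at this
  -- the complete space of candidate curves
  set S : Set C(↥(Icc (0:ℝ) T'), EuclideanSpace ℝ (Fin m)) := {y | ∀ s, y s ∈ box}
    with hS_def
  have hboxclosed : IsClosed box := by
    have : box = ⋂ i, (fun u : EuclideanSpace ℝ (Fin m) => u i) ⁻¹'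
        Icc (x₀ i - α) (x₀ i + α) := by
      ext u; simp [hbox_def, mem_iInter]
    rw [this]
    exact isClosed_iInter fun i => isClosed_Icc.preimage (hcoord i)
  have hSclosed : IsClosed S := by
    have : S = ⋂ s : ↥(Icc (0:ℝ) T'),
        (fun y : C(↥(Icc (0:ℝ) T'), EuclideanSpace ℝ (Fin m)) => y s) ⁻¹' box := by
      ext y; simp [hS_def, mem_iInter]
    rw [this]
    exact isClosed_iInter fun s =>
      hboxclosed.preimage (continuous_eval_const s)
  haveI : CompleteSpace ↥S := hSclosed.completeSpace_coe
  haveI : Nonempty ↥S := ⟨⟨ContinuousMap.const _ x₀, fun s => hx₀box⟩⟩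
  -- extension operator
  set ex : C(↥(Icc (0:ℝ) T'), EuclideanSpace ℝ (Fin m)) → ℝ → EuclideanSpace ℝ (Fin m) :=
    fun y t => y (Set.projIcc 0 T' hle t) with hex_def
  have hexcont : ∀ y, Continuous (ex y) := fun y => y.continuous.comp continuous_projIcc
  have hexval : ∀ y, ∀ t : ℝ, (ht : t ∈ Icc (0:ℝ) T') → ex y t = y ⟨t, ht⟩ := by
    intro y t ht
    simp only [hex_def, Set.projIcc_of_mem hle ht]
  have hexbox : ∀ y : ↥S, ∀ σ ∈ Icc (0:ℝ) T', ex y.1 σ ∈ box := by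
    intro y σ hσ
    rw [hexval y.1 σ hσ]
    exact y.2 _
  -- the Picard operator
  set Φ : ↥S → ↥S := fun y =>
    ⟨⟨fun t => x₀ + ∫ s in (0:ℝ)..(t:ℝ), F (ex y.1) s,
      (hPcont (ex y.1) (hexcont y.1)).restrict⟩,
      fun t => hPbox (ex y.1) (hexcont y.1) (hexbox y) t.1 t.2⟩ with hΦ_def
  -- contraction estimate
  have hcontr : ∀ y₁ y₂ : ↥S, dist (Φ y₁) (Φ y₂) ≤ (T' * c) * dist y₁ y₂ := by
    intro y₁ y₂
    set u₁ : ℝ → EuclideanSpace ℝ (Fin m) := ex y₁.1 with hu₁_def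
    set u₂ : ℝ → EuclideanSpace ℝ (Fin m) := ex y₂.1 with hu₂_def
    set D := dist y₁ y₂ with hD_def
    have hD0 : 0 ≤ D := dist_nonneg
    have hud : ∀ σ ∈ Icc (0:ℝ) T', ‖u₁ σ - u₂ σ‖ ≤ D := by
      intro σ hσ
      rw [hu₁_def, hu₂_def, hexval y₁.1 σ hσ, hexval y₂.1 σ hσ, ← dist_eq_norm]
      calc dist (y₁.1 ⟨σ,hσ⟩) (y₂.1 ⟨σ,hσ⟩) ≤ dist y₁.1 y₂.1 :=
            ContinuousMap.dist_apply_le_dist _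
        _ = D := by rw [hD_def, Subtype.dist_eq]
    have hVd : ∀ s ∈ Icc (0:ℝ) T', ‖V u₁ s - V u₂ s‖ ≤ Real.sqrt m * (Lα * D) := by
      intro s hs
      apply norm_le_sqrt_card' hmpos
      intro i
      have hsub : (V u₁ s - V u₂ s) i = V u₁ s i - V u₂ s i := rfl
      rw [hsub, hVcoord, hVcoord]
      apply sSup_image_Icc_sub_le' hs.1
        ((hg i).comp ((hcoord i).comp (hexcont y₁.1)))
        ((hg i).comp ((hcoord i).comp (hexcont y₂.1)))
      intro σ hσ
      have hσ' : σ ∈ Icc (0:ℝ) T' := ⟨hσ.1, hσ.2.trans hs.2⟩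
      have h1 := hgL i (u₁ σ i) (hexbox y₁ σ hσ' i) (u₂ σ i) (hexbox y₂ σ hσ' i)
      have h2 : |u₁ σ i - u₂ σ i| ≤ D := by
        have h4 := coord_abs_le_norm' (u₁ σ - u₂ σ) i
        have h3 : (u₁ σ - u₂ σ) i = u₁ σ i - u₂ σ i := rfl
        rw [h3] at h4
        exact h4.trans (hud σ hσ')
      calc |g i (u₁ σ i) - g i (u₂ σ i)| ≤ Lα * |u₁ σ i - u₂ σ i| := h1
        _ ≤ Lα * D := mul_le_mul_of_nonneg_left h2 hLα.le
    have hFd : ∀ s ∈ Icc (0:ℝ) T', ‖F u₁ s - F u₂ s‖ ≤ c * D := by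
      intro s hs
      have hsT : s ∈ Icc (0:ℝ) T := ⟨hs.1, hs.2.trans hT'T.le⟩
      have hmain := hfL s hsT (u₁ s) (u₂ s) (V u₁ s) (V u₂ s)
        (hexbox y₁ s hs) (hexbox y₂ s hs)
        (hVmem u₁ (hexcont _) (hexbox y₁) s hs) (hVmem u₂ (hexcont _) (hexbox y₂) s hs)
      calc ‖F u₁ s - F u₂ s‖ ≤ L * (‖u₁ s - u₂ s‖ + ‖V u₁ s - V u₂ s‖) := hmain
        _ ≤ L * (D + Real.sqrt m * (Lα * D)) := by
            apply mul_le_mul_of_nonneg_left _ hL.le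
            exact add_le_add (hud s hs) (hVd s hs)
        _ = c * D := by rw [hc_def]; ring
    rw [Subtype.dist_eq, ContinuousMap.dist_le (by positivity)]
    intro t
    rw [dist_eq_norm]
    have hsub : (Φ y₁).1 t - (Φ y₂).1 t
        = ∫ s in (0:ℝ)..(t:ℝ), (F u₁ s - F u₂ s) := by
      show (x₀ + ∫ s in (0:ℝ)..(t:ℝ), F u₁ s) - (x₀ + ∫ s in (0:ℝ)..(t:ℝ), F u₂ s)
        = ∫ s in (0:ℝ)..(t:ℝ), (F u₁ s - F u₂ s)
      rw [intervalIntegral.integral_sub (hFint u₁ (hexcont _) t t.2)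
        (hFint u₂ (hexcont _) t t.2)]
      abel
    rw [hsub]
    have hb := intervalIntegral.norm_integral_le_of_norm_le_const (C := c * D)
      (a := 0) (b := (t : ℝ)) (f := fun s => F u₁ s - F u₂ s) ?_
    · calc ‖∫ s in (0:ℝ)..(t:ℝ), (F u₁ s - F u₂ s)‖ ≤ c * D * |(t:ℝ) - 0| := hb
        _ ≤ c * D * T' := by
            apply mul_le_mul_of_nonneg_left _ (by positivity)
            rw [sub_zero, abs_of_nonneg t.2.1]
            exact t.2.2
        _ = T' * c * D := by ring
    · intro s hs
      rw [uIoc_of_le t.2.1] at hs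
      exact hFd s ⟨hs.1.le, hs.2.trans t.2.2⟩
  -- the contraction and its fixed point
  have hΦlip : LipschitzWith ⟨T' * c, by positivity⟩ Φ := by
    apply LipschitzWith.of_dist_le_mul
    intro y₁ y₂
    exact hcontr y₁ y₂
  have hΦcontr : ContractingWith ⟨T' * c, by positivity⟩ Φ := by
    constructor
    · exact NNReal.coe_lt_coe.mp (by rw [NNReal.coe_one]; exact hk1)
    · exact hΦlip
  obtain ⟨y, hy⟩ : ∃ y : ↥S, Function.IsFixedPt Φ y := ⟨_, hΦcontr.fixedPoint_isFixedPt⟩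
  set x : ℝ → EuclideanSpace ℝ (Fin m) := ex y.1 with hx_def
  have hxcont : Continuous x := hexcont y.1
  have hfix : ∀ t ∈ Icc (0:ℝ) T', x t = x₀ + ∫ s in (0:ℝ)..t, F x s := by
    intro t ht
    have h1 : x t = y.1 ⟨t, ht⟩ := hexval y.1 t ht
    have h2 := congrArg (fun z : ↥S => z.1 ⟨t, ht⟩) hy
    rw [h1, ← h2]
    rfl
  refine ⟨x, hxcont.continuousOn, ?_, ?_⟩
  · have h0 := hfix 0 ⟨le_rfl, hle⟩
    simpa [intervalIntegral.integral_same] using h0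
  · intro t ht
    show HasDerivWithinAt x (F x t) (Icc 0 T') t
    have hFx := hFcont x hxcont
    have hmeasx : ∀ l : Filter ℝ, Ici (0:ℝ) ∈ l → StronglyMeasurableAtFilter (F x) l volume :=
      fun l hl => ⟨Ici 0, hl, hFx.aestronglyMeasurable measurableSet_Ici⟩
    have hD : HasDerivWithinAt (fun τ => ∫ s in (0:ℝ)..τ, F x s) (F x t) (Icc 0 T') t := by
      rcases eq_or_lt_of_le ht.1 with h0 | h0
    -- t = 0
      · subst h0
        have hmem : Ici (0:ℝ) ∈ 𝓝[>] (0:ℝ) :=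
          mem_of_superset self_mem_nhdsWithin Ioi_subset_Ici_self
        have hcw : ContinuousWithinAt (F x) (Ioi 0) 0 :=
          (hFx 0 self_mem_Ici).mono Ioi_subset_Ici_self
        exact (intervalIntegral.integral_hasDerivWithinAt_right
          (hFint x hxcont 0 ht) (s := Ici 0) (t := Ioi 0)
          (hmeasx _ hmem) hcw).mono Icc_subset_Ici_self
      · have hnl : Ici (0:ℝ) ∈ 𝓝 t := mem_of_superset (Ioi_mem_nhds h0) Ioi_subset_Ici_self
        have hca : ContinuousAt (F x) t := hFx.continuousAt hnl
        exact (intervalIntegral.integral_hasDerivAt_right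
          (hFint x hxcont t ht) (hmeasx _ hnl) hca).hasDerivWithinAt
    exact (hD.const_add x₀).congr (fun τ hτ => hfix τ hτ) (hfix t ht)
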